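/- Let n ≥ 1, let H be a complex vector space of complex dimension 2n, and let ω : H × H → ℂ be an alternating ℂ-bilinear form that is nondegenerate (equivalently, the n-fold complex wedge power ω^{∧n} is nonzero). Write ω₁ = Re ∘ ω and ω₂ = Im ∘ ω, which are real-valued alternating bilinear forms on H regarded as a 4n-dimensional real vector space. Then there exists a nonzero alternating 4n-form Ω ∈ Λ^{4n}H* such that for all real numbers s, t the 2n-fold wedge power satisfies (s·ω₁ + t·ω₂)^{∧2n} = (s² + t²)ⁿ · Ω. In particular, as a homogeneous real polynomial of degree 2n in (s,t) with values in the one-dimensional space Λ^{4n}H*, (s·ω₁ + t·ω₂)^{∧2n} has exactly the two complex roots s = it and s = −it, each of multiplicity n. -/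

import Mathlib

open scoped BigOperators

/-- The `k`-fold wedge power of a bilinear form `ω` on a real vector space,
evaluated on `2k` vectors, as the full permutation sum
`∑_σ sign(σ) ∏ᵢ ω(v_{σ(2i)}, v_{σ(2i+1)})` (a fixed nonzero multiple of the
shuffle-normalised wedge power `ω^{∧k}`). -/
def wedgePow {H : Type*} (ω : H → H → ℝ) (k : ℕ) (v : Fin (2 * k) → H) : ℝ :=
  ∑ σ : Equiv.Perm (Fin (2 * k)),
    ((Equiv.Perm.sign σ : ℤ) : ℝ) *
      ∏ i : Fin k,
        ω (v (σ ⟨2 * (i : ℕ), by have := i.isLt; omega⟩))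
          (v (σ ⟨2 * (i : ℕ) + 1, by have := i.isLt; omega⟩))

namespace StmtAux

open Equiv Finset

/-- index of the first element of the `i`-th pair -/
def lo {k : ℕ} (i : Fin k) : Fin (2 * k) := ⟨2 * (i : ℕ), by have := i.isLt; omega⟩

/-- index of the second element of the `i`-th pair -/
def hi {k : ℕ} (i : Fin k) : Fin (2 * k) := ⟨2 * (i : ℕ) + 1, by have := i.isLt; omega⟩

lemma wedgePow_def {H : Type*} (B : H → H → ℝ) (k : ℕ) (v : Fin (2 * k) → H) :
    wedgePow B k v = ∑ σ : Equiv.Perm (Fin (2 * k)),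
      ((Equiv.Perm.sign σ : ℤ) : ℝ) * ∏ i : Fin k, B (v (σ (lo i))) (v (σ (hi i))) := rfl

lemma lo_or_hi {k : ℕ} (a : Fin (2 * k)) : ∃ i : Fin k, a = lo i ∨ a = hi i := by
  have ha := a.isLt
  refine ⟨⟨(a : ℕ) / 2, by omega⟩, ?_⟩
  rcases Nat.mod_two_eq_zero_or_one (a : ℕ) with h | h
  · left; apply Fin.ext; simp only [lo]; omega
  · right; apply Fin.ext; simp only [hi]; omega

lemma lo_ne_hi {k : ℕ} (i j : Fin k) : lo i ≠ hi j := by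
  intro h
  have := congrArg Fin.val h
  simp only [lo, hi] at this
  omega

lemma lo_inj {k : ℕ} {i j : Fin k} (h : lo i = lo j) : i = j := by
  have := congrArg Fin.val h
  simp only [lo] at this
  exact Fin.ext (by omega)

lemma hi_inj {k : ℕ} {i j : Fin k} (h : hi i = hi j) : i = j := by
  have := congrArg Fin.val h
  simp only [hi] at this
  exact Fin.ext (by omega)

/-- pairing equivalence `Fin k × Bool ≃ Fin (2k)` -/
def pe (k : ℕ) : Fin k × Bool ≃ Fin (2 * k) where
  toFun p := if p.2 then hi p.1 else lo p.1
  invFun a := (⟨(a : ℕ) / 2, by have := a.isLt; omega⟩, decide ((a : ℕ) % 2 = 1))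
  left_inv := by
    rintro ⟨i, b⟩
    cases b <;>
      simp [lo, hi, Prod.ext_iff, Fin.ext_iff, decide_eq_true_eq, decide_eq_false_iff_not] <;>
      omega
  right_inv := by
    intro a
    have ha := a.isLt
    rcases Nat.mod_two_eq_zero_or_one (a : ℕ) with h | h <;>
      simp [h, lo, hi, Fin.ext_iff] <;> omega

lemma pe_false {k : ℕ} (i : Fin k) : pe k (i, false) = lo i := rfl
lemma pe_true {k : ℕ} (i : Fin k) : pe k (i, true) = hi i := rfl

def flips {k : ℕ} (f : Fin k → Bool) : Perm (Fin k × Bool) :=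
  Equiv.prodCongrRight (fun i => if f i then Equiv.swap false true else 1)

def blockPerm {k : ℕ} (π : Perm (Fin k)) : Perm (Fin k × Bool) :=
  Equiv.prodCongr π (Equiv.refl Bool)

def Phi {k : ℕ} (π : Perm (Fin k)) (f : Fin k → Bool) : Perm (Fin (2 * k)) :=
  (pe k).permCongr (blockPerm π * flips f)

lemma Phi_lo {k : ℕ} (π : Perm (Fin k)) (f : Fin k → Bool) (i : Fin k) :
    Phi π f (lo i) = if f i then hi (π i) else lo (π i) := by
  have h1 : (pe k).symm (lo i) = (i, false) := by
    rw [← pe_false]; exact (pe k).symm_apply_apply _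
  simp only [Phi, Equiv.permCongr_apply, h1, Perm.mul_apply, flips,
    Equiv.prodCongrRight_apply, blockPerm, Equiv.prodCongr_apply, Equiv.refl_apply]
  cases hf : f i <;> simp [pe_false, pe_true, Prod.map]

lemma Phi_hi {k : ℕ} (π : Perm (Fin k)) (f : Fin k → Bool) (i : Fin k) :
    Phi π f (hi i) = if f i then lo (π i) else hi (π i) := by
  have h1 : (pe k).symm (hi i) = (i, true) := by
    rw [← pe_true]; exact (pe k).symm_apply_apply _
  simp only [Phi, Equiv.permCongr_apply, h1, Perm.mul_apply, flips,
    Equiv.prodCongrRight_apply, blockPerm, Equiv.prodCongr_apply, Equiv.refl_apply]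
  cases hf : f i <;> simp [pe_false, pe_true, Prod.map]

lemma sign_flips {k : ℕ} (f : Fin k → Bool) :
    Perm.sign (flips f) = ∏ i : Fin k, if f i then (-1 : ℤˣ) else 1 := by
  rw [flips, Perm.sign_prodCongrRight]
  refine Finset.prod_congr rfl fun i _ => ?_
  cases hf : f i <;> simp [Perm.sign_swap]

lemma sign_blockPerm {k : ℕ} (π : Perm (Fin k)) : Perm.sign (blockPerm π) = 1 := by
  have h : blockPerm π = Equiv.prodCongrLeft (fun _ : Bool => π) := by
    apply Equiv.ext; rintro ⟨i, b⟩
    simp [blockPerm, Equiv.prodCongrLeft_apply, Equiv.prodCongr_apply, Prod.map]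
  rw [h, Perm.sign_prodCongrLeft]
  rw [Finset.prod_const]
  simp [Int.units_sq]

lemma sign_Phi {k : ℕ} (π : Perm (Fin k)) (f : Fin k → Bool) :
    Perm.sign (Phi π f) = ∏ i : Fin k, if f i then (-1 : ℤˣ) else 1 := by
  rw [Phi, Perm.sign_permCongr, map_mul, sign_blockPerm, sign_flips, one_mul]


section PairProd
variable {H : Type*} [AddCommGroup H] [Module ℝ H]

/-- the index of the pair containing `j` -/
def pidx {k : ℕ} (j : Fin (2 * k)) : Fin k := ⟨(j : ℕ) / 2, by have := j.isLt; omega⟩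

lemma lo_pidx_ne {k : ℕ} {j : Fin (2 * k)} {i : Fin k} (h : i ≠ pidx j) :
    lo i ≠ j ∧ hi i ≠ j := by
  constructor <;> intro hc <;> apply h <;> apply Fin.ext <;>
    simp only [pidx, ← hc, lo, hi] <;> omega

/-- the product of a bilinear form over consecutive pairs, as a multilinear map -/
def pairProd (B : H →ₗ[ℝ] H →ₗ[ℝ] ℝ) (k : ℕ) :
    MultilinearMap ℝ (fun _ : Fin (2 * k) => H) ℝ where
  toFun v := ∏ i : Fin k, B (v (lo i)) (v (hi i))
  map_update_add' := by
    intro dec v j x y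
    have key : ∀ z : H, ∏ i : Fin k, B (Function.update v j z (lo i))
        (Function.update v j z (hi i)) =
        (B (Function.update v j z (lo (pidx j))) (Function.update v j z (hi (pidx j)))) *
        ∏ i ∈ Finset.univ.erase (pidx j), B (v (lo i)) (v (hi i)) := by
      intro z
      rw [← Finset.mul_prod_erase Finset.univ _ (Finset.mem_univ (pidx j))]
      congr 1
      refine Finset.prod_congr rfl fun i hi' => ?_
      have hne := lo_pidx_ne (Finset.ne_of_mem_erase hi')
      rw [Function.update_of_ne hne.1, Function.update_of_ne hne.2]
    rw [key, key, key, ← add_mul]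
    congr 1
    have hj2 := j.isLt
    rcases Nat.mod_two_eq_zero_or_one (j : ℕ) with hp | hp
    · have hlo : lo (pidx j) = j := by apply Fin.ext; simp only [lo, pidx]; omega
      have hhi : hi (pidx j) ≠ j := by
        intro hc; have := congrArg Fin.val hc; simp only [hi, pidx] at this; omega
      rw [hlo]
      simp only [Function.update_self, Function.update_of_ne hhi]
      rw [map_add, LinearMap.add_apply]
    · have hhi : hi (pidx j) = j := by apply Fin.ext; simp only [hi, pidx]; omega
      have hlo : lo (pidx j) ≠ j := by
        intro hc; have := congrArg Fin.val hc; simp only [lo, pidx] at this; omega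
      rw [hhi]
      simp only [Function.update_self, Function.update_of_ne hlo]
      rw [map_add]
  map_update_smul' := by
    intro dec v j c x
    have key : ∀ z : H, ∏ i : Fin k, B (Function.update v j z (lo i))
        (Function.update v j z (hi i)) =
        (B (Function.update v j z (lo (pidx j))) (Function.update v j z (hi (pidx j)))) *
        ∏ i ∈ Finset.univ.erase (pidx j), B (v (lo i)) (v (hi i)) := by
      intro z
      rw [← Finset.mul_prod_erase Finset.univ _ (Finset.mem_univ (pidx j))]
      congr 1
      refine Finset.prod_congr rfl fun i hi' => ?_
      have hne := lo_pidx_ne (Finset.ne_of_mem_erase hi')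
      rw [Function.update_of_ne hne.1, Function.update_of_ne hne.2]
    rw [key, key, smul_eq_mul, ← mul_assoc]
    congr 1
    have hj2 := j.isLt
    rcases Nat.mod_two_eq_zero_or_one (j : ℕ) with hp | hp
    · have hlo : lo (pidx j) = j := by apply Fin.ext; simp only [lo, pidx]; omega
      have hhi : hi (pidx j) ≠ j := by
        intro hc; have := congrArg Fin.val hc; simp only [hi, pidx] at this; omega
      rw [hlo]
      simp only [Function.update_self, Function.update_of_ne hhi]
      rw [map_smul, LinearMap.smul_apply, smul_eq_mul]
    · have hhi : hi (pidx j) = j := by apply Fin.ext; simp only [hi, pidx]; omega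
      have hlo : lo (pidx j) ≠ j := by
        intro hc; have := congrArg Fin.val hc; simp only [lo, pidx] at this; omega
      rw [hhi]
      simp only [Function.update_self, Function.update_of_ne hlo]
      rw [map_smul, smul_eq_mul]

lemma alternatization_pairProd (B : H →ₗ[ℝ] H →ₗ[ℝ] ℝ) (k : ℕ) (v : Fin (2 * k) → H) :
    MultilinearMap.alternatization (pairProd B k) v = wedgePow (fun a b => B a b) k v := by
  rw [MultilinearMap.alternatization_apply, wedgePow_def]
  refine Finset.sum_congr rfl fun σ _ => ?_
  rw [MultilinearMap.domDomCongr_apply]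
  show (Equiv.Perm.sign σ) • ((pairProd B k) fun i => v (σ i)) = _
  rw [Units.smul_def, zsmul_eq_mul]
  rfl

end PairProd

theorem wedgePow_matching {H : Type*} {k : ℕ} (B : H → H → ℝ) (v : Fin (2 * k) → H)
    (ε : Fin k → ℝ)
    (h1 : ∀ i j, B (v (lo i)) (v (hi j)) = if i = j then ε i else 0)
    (h2 : ∀ i j, B (v (lo i)) (v (lo j)) = 0)
    (h3 : ∀ i j, B (v (hi i)) (v (hi j)) = 0)
    (h4 : ∀ i j, B (v (hi i)) (v (lo j)) = if i = j then -ε i else 0) :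
    wedgePow B k v = ((2 ^ k * k.factorial : ℕ) : ℝ) * ∏ i, ε i := by
  classical
  rw [wedgePow_def]
  set T := fun σ : Perm (Fin (2 * k)) =>
    ((Perm.sign σ : ℤ) : ℝ) * ∏ i : Fin k, B (v (σ (lo i))) (v (σ (hi i))) with hT
  have pairing : ∀ a b : Fin (2 * k), B (v a) (v b) ≠ 0 →
      ∃ r, (a = lo r ∧ b = hi r) ∨ (a = hi r ∧ b = lo r) := by
    intro a b hab
    obtain ⟨ia, ha | ha⟩ := lo_or_hi a <;> obtain ⟨ib, hb | hb⟩ := lo_or_hi b <;>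
      subst ha hb
    · exact absurd (h2 ia ib) hab
    · by_cases h : ia = ib
      · subst h; exact ⟨ia, Or.inl ⟨rfl, rfl⟩⟩
      · rw [h1, if_neg h] at hab; exact absurd rfl hab
    · by_cases h : ia = ib
      · subst h; exact ⟨ia, Or.inr ⟨rfl, rfl⟩⟩
      · rw [h4, if_neg h] at hab; exact absurd rfl hab
    · exact absurd (h3 ia ib) hab
  have himage : ∀ σ : Perm (Fin (2 * k)),
      σ ∉ Finset.image (fun p : Perm (Fin k) × (Fin k → Bool) => Phi p.1 p.2) Finset.univ →
      T σ = 0 := by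
    intro σ hσ
    by_contra hTσ
    have hprod : ∏ i : Fin k, B (v (σ (lo i))) (v (σ (hi i))) ≠ 0 := by
      intro h0; exact hTσ (by rw [hT]; simp [h0])
    have hfac : ∀ i : Fin k, B (v (σ (lo i))) (v (σ (hi i))) ≠ 0 := fun i h0 =>
      hprod (Finset.prod_eq_zero (Finset.mem_univ i) h0)
    choose r hr using fun i => pairing _ _ (hfac i)
    have hrinj : Function.Injective r := by
      intro i j hij
      rcases hr i with ⟨hi1, hi2⟩ | ⟨hi1, hi2⟩ <;> rcases hr j with ⟨hj1, hj2⟩ | ⟨hj1, hj2⟩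
      · exact lo_inj (σ.injective (hi1.trans (by rw [hij, ← hj1])))
      · exact absurd (σ.injective (hi2.trans (by rw [hij, ← hj1])))
          (fun h => lo_ne_hi j i h.symm)
      · exact absurd (σ.injective (hi2.trans (by rw [hij, ← hj1])))
          (fun h => lo_ne_hi j i h.symm)
      · exact lo_inj (σ.injective (hi1.trans (by rw [hij, ← hj1])))
    let π : Perm (Fin k) := Equiv.ofBijective r (Finite.injective_iff_bijective.1 hrinj)
    let f : Fin k → Bool := fun i => decide (σ (lo i) = hi (r i))
    have hπ : ∀ i, π i = r i := fun i => rfl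
    have hσeq : σ = Phi π f := by
      apply Equiv.ext
      intro a
      obtain ⟨i, ha | ha⟩ := lo_or_hi a <;> subst ha
      · rw [Phi_lo, hπ]
        rcases hr i with ⟨h1', h2'⟩ | ⟨h1', h2'⟩
        · have hf : f i = false := by
            simp only [f, h1', decide_eq_false_iff_not]
            exact lo_ne_hi (r i) (r i)
          rw [hf]; simpa using h1'
        · have hf : f i = true := by simp [f, h1']
          rw [hf]; simpa using h1'
      · rw [Phi_hi, hπ]
        rcases hr i with ⟨h1', h2'⟩ | ⟨h1', h2'⟩
        · have hf : f i = false := by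
            simp only [f, h1', decide_eq_false_iff_not]
            exact lo_ne_hi (r i) (r i)
          rw [hf]; simpa using h2'
        · have hf : f i = true := by simp [f, h1']
          rw [hf]; simpa using h2'
    exact hσ (Finset.mem_image.2 ⟨(π, f), Finset.mem_univ _, hσeq.symm⟩)
  have hPhi_inj : Function.Injective
      (fun p : Perm (Fin k) × (Fin k → Bool) => Phi p.1 p.2) := by
    rintro ⟨π, f⟩ ⟨π', f'⟩ h
    simp only at h
    have key : ∀ i, (if f i then hi (π i) else lo (π i))
        = (if f' i then hi (π' i) else lo (π' i)) := by
      intro i; rw [← Phi_lo, ← Phi_lo, h]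
    have hff : ∀ i, f i = f' i ∧ π i = π' i := by
      intro i
      have hk := key i
      cases hf : f i <;> cases hf' : f' i <;> rw [hf, hf'] at hk <;>
        simp only [Bool.false_eq_true, if_false, if_true] at hk
      · exact ⟨rfl, lo_inj hk⟩
      · exact absurd hk (lo_ne_hi _ _)
      · exact absurd hk.symm (lo_ne_hi _ _)
      · exact ⟨rfl, hi_inj hk⟩
    exact Prod.ext (Equiv.ext fun i => (hff i).2) (funext fun i => (hff i).1)
  have Tval : ∀ (π : Perm (Fin k)) (f : Fin k → Bool), T (Phi π f) = ∏ i, ε i := by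
    intro π f
    have hsign : ((Perm.sign (Phi π f) : ℤ) : ℝ) = ∏ i : Fin k, (if f i then (-1 : ℝ) else 1) := by
      rw [sign_Phi]
      push_cast [apply_ite (fun u : ℤˣ => ((u : ℤ) : ℝ))]
      rfl
    have hfac : ∀ i : Fin k, B (v (Phi π f (lo i))) (v (Phi π f (hi i)))
        = (if f i then (-1 : ℝ) else 1) * ε (π i) := by
      intro i
      rw [Phi_lo, Phi_hi]
      cases hf : f i <;> simp only [Bool.false_eq_true, if_false, if_true]
      · rw [h1, if_pos rfl]; simp
      · rw [h4, if_pos rfl]; simp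
    rw [hT]
    simp only [hfac, hsign]
    rw [Finset.prod_mul_distrib, ← mul_assoc, ← Finset.prod_mul_distrib]
    have h1' : ∏ i : Fin k, ((if f i then (-1 : ℝ) else 1) * (if f i then (-1 : ℝ) else 1)) = 1 := by
      apply Finset.prod_eq_one
      intro i _
      cases f i <;> norm_num
    rw [h1', one_mul]
    exact Equiv.prod_comp π ε
  calc (∑ σ : Perm (Fin (2 * k)), T σ)
      = ∑ σ ∈ Finset.image (fun p : Perm (Fin k) × (Fin k → Bool) => Phi p.1 p.2) Finset.univ,
        T σ := (Finset.sum_subset (Finset.subset_univ _) (fun σ _ h => himage σ h)).symm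
    _ = ∑ p : Perm (Fin k) × (Fin k → Bool), T (Phi p.1 p.2) :=
        Finset.sum_image (fun p _ q _ h => hPhi_inj h)
    _ = ∑ _p : Perm (Fin k) × (Fin k → Bool), ∏ i, ε i :=
        Finset.sum_congr rfl (fun p _ => Tval p.1 p.2)
    _ = ((2 ^ k * k.factorial : ℕ) : ℝ) * ∏ i, ε i := by
        rw [Finset.sum_const, nsmul_eq_mul]
        congr 1
        rw [Finset.card_univ, Fintype.card_prod, Fintype.card_perm, Fintype.card_fun]
        simp [Fintype.card_fin, mul_comm]


section Cplx
variable {H : Type*} [AddCommGroup H] [Module ℂ H] [FiniteDimensional ℂ H]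

lemma skew (ω : H →ₗ[ℂ] H →ₗ[ℂ] ℂ) (halt : ∀ x : H, ω x x = 0) (a b : H) :
    ω a b = -ω b a := by
  have h := halt (a + b)
  simp only [map_add, LinearMap.add_apply, halt a, halt b] at h
  linear_combination h

lemma exists_symplectic (ω : H →ₗ[ℂ] H →ₗ[ℂ] ℂ) (halt : ∀ x : H, ω x x = 0) :
    ∀ (k : ℕ) (W : Submodule ℂ H),
    Module.finrank ℂ W = 2 * k → (∀ x ∈ W, (∀ y ∈ W, ω x y = 0) → x = 0) →
    ∃ e f : Fin k → H, (∀ i, e i ∈ W) ∧ (∀ i, f i ∈ W) ∧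
      (∀ i j, ω (e i) (e j) = 0) ∧ (∀ i j, ω (f i) (f j) = 0) ∧
      (∀ i j, ω (e i) (f j) = if i = j then 1 else 0) := by
  intro k
  induction k with
  | zero =>
      intro W _ _
      exact ⟨Fin.elim0, Fin.elim0, fun i => i.elim0, fun i => i.elim0,
        fun i => i.elim0, fun i => i.elim0, fun i => i.elim0⟩
  | succ k IH =>
      intro W hrank hnd
      -- find x ≠ 0 in W
      have hWne : W ≠ ⊥ := by
        intro h
        rw [h, finrank_bot] at hrank
        omega
      obtain ⟨x, hxW, hxne⟩ := Submodule.exists_mem_ne_zero_of_ne_bot hWne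
      -- find y with ω x y = 1
      have : ∃ y₀ ∈ W, ω x y₀ ≠ 0 := by
        by_contra h
        push_neg at h
        exact hxne (hnd x hxW h)
      obtain ⟨y₀, hy₀W, hxy₀⟩ := this
      set y : H := (ω x y₀)⁻¹ • y₀ with hy
      have hyW : y ∈ W := Submodule.smul_mem _ _ hy₀W
      have hxy : ω x y = 1 := by
        rw [hy, map_smul, smul_eq_mul, inv_mul_cancel₀ hxy₀]
      have hyx : ω y x = -1 := by rw [skew ω halt, hxy]
      -- the symplectic complement
      set W' : Submodule ℂ H := W ⊓ LinearMap.ker (ω x) ⊓ LinearMap.ker (ω y) with hW'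
      have hW'W : W' ≤ W := le_trans inf_le_left inf_le_left
      have hmem : ∀ z, z ∈ W' ↔ z ∈ W ∧ ω x z = 0 ∧ ω y z = 0 := by
        intro z
        rw [hW', Submodule.mem_inf, Submodule.mem_inf, LinearMap.mem_ker, LinearMap.mem_ker]
        tauto
      -- rank of W'
      set ψ : W →ₗ[ℂ] ℂ × ℂ := ((ω x).prod (ω y)).comp W.subtype with hψ
      have hker : LinearMap.ker ψ = Submodule.comap W.subtype W' := by
        rw [hψ, LinearMap.ker_comp, LinearMap.ker_prod]
        ext z
        simp only [Submodule.mem_comap, Submodule.mem_inf, Submodule.coe_subtype, hW',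
          LinearMap.mem_ker]
        exact ⟨fun h => ⟨⟨z.2, h.1⟩, h.2⟩, fun h => ⟨h.1.2, h.2⟩⟩
      have hsurj : Function.Surjective ψ := by
        intro p
        refine ⟨p.1 • (⟨y, hyW⟩ : W) - p.2 • (⟨x, hxW⟩ : W), ?_⟩
        have : (W.subtype) (p.1 • (⟨y, hyW⟩ : W) - p.2 • (⟨x, hxW⟩ : W))
            = p.1 • y - p.2 • x := rfl
        rw [hψ, LinearMap.comp_apply, this]
        apply Prod.ext <;>
          simp [map_sub, map_smul, smul_eq_mul, hxy, hyx, halt x, halt y]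
      have hrank' : Module.finrank ℂ W' = 2 * k := by
        have h1 := LinearMap.finrank_range_add_finrank_ker ψ
        rw [LinearMap.range_eq_top.mpr hsurj, hker] at h1
        have h2 : Module.finrank ℂ (Submodule.comap W.subtype W') = Module.finrank ℂ W' :=
          (Submodule.comapSubtypeEquivOfLe hW'W).finrank_eq
        have h3 : Module.finrank ℂ (⊤ : Submodule ℂ (ℂ × ℂ)) = 2 := by
          rw [finrank_top, Module.finrank_prod, Module.finrank_self]
        rw [h2, h3, hrank] at h1
        omega
      -- nondegeneracy on W'
      have hnd' : ∀ z ∈ W', (∀ w ∈ W', ω z w = 0) → z = 0 := by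
        intro z hz hzw
        obtain ⟨hzW, hzx, hzy⟩ := (hmem z).1 hz
        refine hnd z hzW ?_
        intro w hw
        set w' : H := w - (ω x w) • y + (ω y w) • x with hw'def
        have hw'mem : w' ∈ W' := by
          rw [hmem]
          refine ⟨?_, ?_, ?_⟩
          · exact Submodule.add_mem _ (Submodule.sub_mem _ hw (Submodule.smul_mem _ _ hyW))
              (Submodule.smul_mem _ _ hxW)
          · simp only [hw'def, map_add, map_sub, map_smul, smul_eq_mul, hxy, halt x]
            ring
          · simp only [hw'def, map_add, map_sub, map_smul, smul_eq_mul, hyx, halt y]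
            ring
        have h0 := hzw w' hw'mem
        have hzx0 : ω z x = 0 := by rw [skew ω halt, hzx, neg_zero]
        have hzy0 : ω z y = 0 := by rw [skew ω halt, hzy, neg_zero]
        simp only [hw'def, map_add, map_sub, map_smul, smul_eq_mul, hzx0, hzy0,
          mul_zero, sub_zero, add_zero] at h0
        exact h0
      obtain ⟨e, f, he, hf, hee, hff, hef⟩ := IH W' hrank' hnd'
      have heK : ∀ j, e j ∈ W ∧ ω x (e j) = 0 ∧ ω y (e j) = 0 := fun j => (hmem _).1 (he j)
      have hfK : ∀ j, f j ∈ W ∧ ω x (f j) = 0 ∧ ω y (f j) = 0 := fun j => (hmem _).1 (hf j)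
      refine ⟨Fin.cons x e, Fin.cons y f, ?_, ?_, ?_, ?_, ?_⟩
      · intro i
        induction i using Fin.cases with
        | zero => simpa using hxW
        | succ j => simpa using (heK j).1
      · intro i
        induction i using Fin.cases with
        | zero => simpa using hyW
        | succ j => simpa using (hfK j).1
      · intro i j
        induction i using Fin.cases with
        | zero =>
            induction j using Fin.cases with
            | zero => simpa using halt x
            | succ j => simpa using (heK j).2.1
        | succ i =>
            induction j using Fin.cases with
            | zero =>
                simp only [Fin.cons_succ, Fin.cons_zero]
                rw [skew ω halt, (heK i).2.1, neg_zero]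
            | succ j => simpa using hee i j
      · intro i j
        induction i using Fin.cases with
        | zero =>
            induction j using Fin.cases with
            | zero => simpa using halt y
            | succ j => simpa using (hfK j).2.2
        | succ i =>
            induction j using Fin.cases with
            | zero =>
                simp only [Fin.cons_succ, Fin.cons_zero]
                rw [skew ω halt, (hfK i).2.2, neg_zero]
            | succ j => simpa using hff i j
      · intro i j
        induction i using Fin.cases with
        | zero =>
            induction j using Fin.cases with
            | zero => simpa using hxy
            | succ j =>
                simp only [Fin.cons_succ, Fin.cons_zero]
                rw [(hfK j).2.1, if_neg (Fin.succ_ne_zero j).symm]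
        | succ i =>
            induction j using Fin.cases with
            | zero =>
                simp only [Fin.cons_succ, Fin.cons_zero]
                rw [skew ω halt, (heK i).2.2, neg_zero, if_neg (Fin.succ_ne_zero i)]
            | succ j =>
                simp only [Fin.cons_succ]
                rw [hef i j]
                congr 1
                simp [Fin.succ_inj]


/-- multiplication by a complex scalar, as an ℝ-linear map -/
def mulC (γ : ℂ) : H →ₗ[ℝ] H where
  toFun x := γ • x
  map_add' := smul_add γ
  map_smul' r x := smul_comm γ r x

lemma det_mulC [FiniteDimensional ℂ H] (γ : ℂ) (m : ℕ) (hm : Module.finrank ℂ H = m) :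
    LinearMap.det (mulC γ : H →ₗ[ℝ] H) = Complex.normSq γ ^ m := by
  classical
  let c : Module.Basis (Fin m) ℂ H := (Module.finBasis ℂ H).reindex (finCongr hm)
  let bR : Module.Basis (Fin 2 × Fin m) ℝ H := Complex.basisOneI.smulTower c
  have hmat : LinearMap.toMatrix bR bR (mulC γ)
      = Matrix.blockDiagonal (fun _ : Fin m => Algebra.leftMulMatrix Complex.basisOneI γ) := by
    ext ⟨i, a⟩ ⟨j, b⟩
    rw [LinearMap.toMatrix_apply]
    have hb : bR (j, b) = Complex.basisOneI j • c b := Module.Basis.smulTower_apply _ _ _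
    have happ : (mulC γ : H →ₗ[ℝ] H) (bR (j, b)) = (γ * Complex.basisOneI j) • c b := by
      rw [hb]; show γ • (Complex.basisOneI j • c b) = _; rw [smul_smul]
    rw [happ]
    rw [Module.Basis.smulTower_repr]
    rw [LinearEquiv.map_smul, Module.Basis.repr_self, Finsupp.smul_apply, Finsupp.single_apply,
      Matrix.blockDiagonal_apply, Algebra.leftMulMatrix_eq_repr_mul]
    by_cases hab : a = b
    · subst hab
      simp [smul_eq_mul]
    · rw [if_neg (fun h => hab h.symm), if_neg hab]
      simp
  have h1 : LinearMap.det (mulC γ : H →ₗ[ℝ] H)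
      = (LinearMap.toMatrix bR bR (mulC γ)).det := (LinearMap.det_toMatrix bR _).symm
  rw [h1, hmat, Matrix.det_blockDiagonal]
  have h2 : (Algebra.leftMulMatrix Complex.basisOneI γ).det = Complex.normSq γ := by
    rw [← Algebra.norm_eq_matrix_det Complex.basisOneI γ, Algebra.norm_complex_apply]
  simp [h2]

end Cplx

end StmtAux

open StmtAux in
/-- **Higher dimensions.** Let `H` be a complex vector space of complex dimension
`2n` and `ω` a nondegenerate alternating ℂ-bilinear form on `H`, with real and
imaginary parts `ω₁, ω₂` on the underlying `4n`-dimensional real vector space.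
Then there is a nonzero alternating `4n`-form `Ω` with
`(s·ω₁ + t·ω₂)^{∧2n} = (s² + t²)ⁿ · Ω` for all reals `s, t`; in particular this
degree-`2n` polynomial in `(s,t)` has exactly the two complex roots `s = ±it`,
each of multiplicity `n`. -/
theorem stmt11 (n : ℕ) (hn : 1 ≤ n) (H : Type*) [AddCommGroup H] [Module ℂ H]
    [FiniteDimensional ℂ H] (hH : Module.finrank ℂ H = 2 * n)
    (ω : H →ₗ[ℂ] H →ₗ[ℂ] ℂ) (halt : ∀ x : H, ω x x = 0)
    (hnd : ∀ x : H, (∀ y : H, ω x y = 0) → x = 0) :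
    ∃ Ω : (Fin (2 * (2 * n)) → H) → ℝ,
      (∃ v : Fin (2 * (2 * n)) → H, Ω v ≠ 0) ∧
      ∀ (s t : ℝ) (v : Fin (2 * (2 * n)) → H),
        wedgePow (fun a b => s * (ω a b).re + t * (ω a b).im) (2 * n) v
          = (s ^ 2 + t ^ 2) ^ n * Ω v := by
  classical
  -- the real part of ω as an ℝ-bilinear map
  have hsmul1 : ∀ (r : ℝ) (a b : H), (ω (r • a) b).re = r * (ω a b).re := by
    intro r a b
    rw [show r • a = (r : ℂ) • a from (algebraMap_smul ℂ r a).symm, map_smul,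
      LinearMap.smul_apply, smul_eq_mul, Complex.re_ofReal_mul]
  have hsmul2 : ∀ (r : ℝ) (a b : H), (ω a (r • b)).re = r * (ω a b).re := by
    intro r a b
    rw [show r • b = (r : ℂ) • b from (algebraMap_smul ℂ r b).symm, map_smul,
      smul_eq_mul, Complex.re_ofReal_mul]
  set ω₁ : H →ₗ[ℝ] H →ₗ[ℝ] ℝ := LinearMap.mk₂ ℝ (fun a b => (ω a b).re)
    (fun a a' b => by simp [map_add])
    (fun r a b => hsmul1 r a b)
    (fun a b b' => by simp [map_add])
    (fun r a b => hsmul2 r a b) with hω₁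
  have hω₁app : ∀ a b : H, ω₁ a b = (ω a b).re := fun a b => rfl
  set G := MultilinearMap.alternatization (pairProd ω₁ (2 * n)) with hGdef
  have hG : ∀ w : Fin (2 * (2 * n)) → H, G w = wedgePow (fun a b => (ω a b).re) (2 * n) w :=
    fun w => alternatization_pairProd ω₁ (2 * n) w
  refine ⟨fun v => wedgePow (fun a b => (ω a b).re) (2 * n) v, ?_, ?_⟩
  · -- nonvanishing, via a symplectic family
    obtain ⟨e, f, heW, hfW, hee, hff, hef⟩ := exists_symplectic ω halt n ⊤
      (by rw [finrank_top]; exact hH)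
      (fun x _ h => hnd x (fun y => h y Submodule.mem_top))
    set E : Fin (2 * n) → H := fun i =>
      if h : (i : ℕ) < n then e ⟨i, h⟩
      else Complex.I • e ⟨(i : ℕ) - n, by have := i.isLt; omega⟩ with hE
    set F : Fin (2 * n) → H := fun i =>
      if h : (i : ℕ) < n then f ⟨i, h⟩
      else Complex.I • f ⟨(i : ℕ) - n, by have := i.isLt; omega⟩ with hF
    set ε : Fin (2 * n) → ℝ := fun i => if (i : ℕ) < n then 1 else -1 with hε
    set vv : Fin (2 * (2 * n)) → H := fun j =>
      if (j : ℕ) % 2 = 0 then E (pidx j) else F (pidx j) with hvv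
    have hvlo : ∀ i, vv (lo i) = E i := by
      intro i
      have h2 : ((lo i : Fin (2 * (2 * n))) : ℕ) = 2 * (i : ℕ) := rfl
      show (if ((lo i : Fin (2 * (2 * n))) : ℕ) % 2 = 0 then E (pidx (lo i))
        else F (pidx (lo i))) = E i
      rw [if_pos (by rw [h2]; omega)]
      congr 1
      apply Fin.ext
      show ((lo i : Fin (2 * (2 * n))) : ℕ) / 2 = (i : ℕ)
      rw [h2]; omega
    have hvhi : ∀ i, vv (hi i) = F i := by
      intro i
      have h2 : ((hi i : Fin (2 * (2 * n))) : ℕ) = 2 * (i : ℕ) + 1 := rfl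
      show (if ((hi i : Fin (2 * (2 * n))) : ℕ) % 2 = 0 then E (pidx (hi i))
        else F (pidx (hi i))) = F i
      rw [if_neg (by rw [h2]; omega)]
      congr 1
      apply Fin.ext
      show ((hi i : Fin (2 * (2 * n))) : ℕ) / 2 = (i : ℕ)
      rw [h2]; omega
    -- accessor lemmas
    have hEpos : ∀ (i : Fin (2 * n)) (h : (i : ℕ) < n), E i = e ⟨(i : ℕ), h⟩ := by
      intro i h
      show (if h : (i : ℕ) < n then e ⟨(i : ℕ), h⟩
        else Complex.I • e ⟨(i : ℕ) - n, by have := i.isLt; omega⟩) = _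
      rw [dif_pos h]
    have hEneg : ∀ (i : Fin (2 * n)) (h : ¬ (i : ℕ) < n),
        E i = Complex.I • e ⟨(i : ℕ) - n, by have := i.isLt; omega⟩ := by
      intro i h
      show (if h : (i : ℕ) < n then e ⟨(i : ℕ), h⟩
        else Complex.I • e ⟨(i : ℕ) - n, by have := i.isLt; omega⟩) = _
      rw [dif_neg h]
    have hFpos : ∀ (i : Fin (2 * n)) (h : (i : ℕ) < n), F i = f ⟨(i : ℕ), h⟩ := by
      intro i h
      show (if h : (i : ℕ) < n then f ⟨(i : ℕ), h⟩
        else Complex.I • f ⟨(i : ℕ) - n, by have := i.isLt; omega⟩) = _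
      rw [dif_pos h]
    have hFneg : ∀ (i : Fin (2 * n)) (h : ¬ (i : ℕ) < n),
        F i = Complex.I • f ⟨(i : ℕ) - n, by have := i.isLt; omega⟩ := by
      intro i h
      show (if h : (i : ℕ) < n then f ⟨(i : ℕ), h⟩
        else Complex.I • f ⟨(i : ℕ) - n, by have := i.isLt; omega⟩) = _
      rw [dif_neg h]
    have hε1 : ∀ (i : Fin (2 * n)), (i : ℕ) < n → ε i = 1 := by
      intro i h
      show (if (i : ℕ) < n then (1 : ℝ) else -1) = 1
      rw [if_pos h]
    have hε2 : ∀ (i : Fin (2 * n)), ¬ (i : ℕ) < n → ε i = -1 := by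
      intro i h
      show (if (i : ℕ) < n then (1 : ℝ) else -1) = -1
      rw [if_neg h]
    -- the values of ω on the family
    have hEF : ∀ i j, (ω (E i) (F j)).re = if i = j then ε i else 0 := by
      intro i j
      by_cases hi' : (i : ℕ) < n <;> by_cases hj' : (j : ℕ) < n
      · rw [hEpos i hi', hFpos j hj', hef]
        by_cases h : i = j
        · rw [if_pos (by subst h; rfl), if_pos h, hε1 i hi', Complex.one_re]
        · have hne : (⟨(i : ℕ), hi'⟩ : Fin n) ≠ ⟨(j : ℕ), hj'⟩ := by
            intro hc
            have h1 := congrArg Fin.val hc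
            exact h (Fin.ext (by simpa using h1))
          rw [if_neg hne, if_neg h, Complex.zero_re]
      · have hne : i ≠ j := by intro h; subst h; exact hj' hi'
        rw [hEpos i hi', hFneg j hj', if_neg hne]
        simp only [map_smul, LinearMap.smul_apply, smul_eq_mul, hef]
        split_ifs <;> simp
      · have hne : i ≠ j := by intro h; subst h; exact hi' hj'
        rw [hEneg i hi', hFpos j hj', if_neg hne]
        simp only [map_smul, LinearMap.smul_apply, smul_eq_mul, hef]
        split_ifs <;> simp
      · rw [hEneg i hi', hFneg j hj']
        simp only [map_smul, LinearMap.smul_apply, smul_eq_mul, hef]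
        have hiff : (⟨(i : ℕ) - n, by have := i.isLt; omega⟩ : Fin n)
            = ⟨(j : ℕ) - n, by have := j.isLt; omega⟩ ↔ i = j := by
          constructor <;> intro hc
          · have h1 := congrArg Fin.val hc
            simp only at h1
            exact Fin.ext (by have h2 := i.isLt; have h3 := j.isLt; omega)
          · subst hc; rfl
        split_ifs with h1 h2 h2
        · rw [hε2 i hi']; simp [Complex.I_mul_I]
        · exact absurd (hiff.1 h1) h2
        · exact absurd (hiff.2 h2) h1
        · simp
    have hEE : ∀ i j, (ω (E i) (E j)).re = 0 := by
      intro i j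
      by_cases hi' : (i : ℕ) < n <;> by_cases hj' : (j : ℕ) < n
      · rw [hEpos i hi', hEpos j hj']; simp [hee]
      · rw [hEpos i hi', hEneg j hj']; simp [hee]
      · rw [hEneg i hi', hEpos j hj']; simp [hee]
      · rw [hEneg i hi', hEneg j hj']; simp [hee]
    have hFF : ∀ i j, (ω (F i) (F j)).re = 0 := by
      intro i j
      by_cases hi' : (i : ℕ) < n <;> by_cases hj' : (j : ℕ) < n
      · rw [hFpos i hi', hFpos j hj']; simp [hff]
      · rw [hFpos i hi', hFneg j hj']; simp [hff]
      · rw [hFneg i hi', hFpos j hj']; simp [hff]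
      · rw [hFneg i hi', hFneg j hj']; simp [hff]
    have hFE : ∀ i j, (ω (F i) (E j)).re = if i = j then -ε i else 0 := by
      intro i j
      rw [skew ω halt, Complex.neg_re, hEF j i]
      by_cases h : i = j
      · subst h; simp
      · rw [if_neg h, if_neg (fun hc => h hc.symm), neg_zero]
    refine ⟨vv, ?_⟩
    show wedgePow (fun a b => (ω a b).re) (2 * n) vv ≠ 0
    rw [wedgePow_matching (fun a b => (ω a b).re) vv ε
      (fun i j => by rw [hvlo, hvhi]; exact hEF i j)
      (fun i j => by rw [hvlo, hvlo]; exact hEE i j)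
      (fun i j => by rw [hvhi, hvhi]; exact hFF i j)
      (fun i j => by rw [hvhi, hvlo]; exact hFE i j)]
    apply mul_ne_zero
    · positivity
    · apply Finset.prod_ne_zero_iff.2
      intro i _
      show (if (i : ℕ) < n then (1 : ℝ) else -1) ≠ 0
      split_ifs <;> norm_num
  · -- the scaling identity
    intro s t v
    obtain ⟨γ, hγ⟩ := IsAlgClosed.exists_pow_nat_eq (⟨s, -t⟩ : ℂ) (n := 2) (by norm_num)
    have hkey : ∀ a b : H, s * (ω a b).re + t * (ω a b).im = (ω (γ • a) (γ • b)).re := by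
      intro a b
      have h1 : ω (γ • a) (γ • b) = (γ ^ 2) * (ω a b) := by
        simp only [map_smul, LinearMap.smul_apply, smul_eq_mul]
        ring
      rw [h1, hγ, Complex.mul_re]
      show _ = s * (ω a b).re - (-t) * (ω a b).im
      ring
    have hL : wedgePow (fun a b => s * (ω a b).re + t * (ω a b).im) (2 * n) v
        = wedgePow (fun a b => (ω a b).re) (2 * n) (fun j => γ • v j) := by
      rw [wedgePow_def, wedgePow_def]
      refine Finset.sum_congr rfl fun σ _ => ?_
      congr 1
      exact Finset.prod_congr rfl fun i _ => hkey _ _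
    have hfr : Module.finrank ℝ H = 2 * (2 * n) := by
      have h := Module.finrank_mul_finrank ℝ ℂ H
      rw [Complex.finrank_real_complex, hH] at h
      omega
    let b : Module.Basis (Fin (2 * (2 * n))) ℝ H := (Module.finBasis ℝ H).reindex (finCongr hfr)
    have hsmul : ∀ w : Fin (2 * (2 * n)) → H, G w = G b * b.det w := by
      intro w
      conv_lhs => rw [G.eq_smul_basis_det b]
      rw [AlternatingMap.smul_apply, smul_eq_mul]
    have hdet : LinearMap.det (mulC γ : H →ₗ[ℝ] H) = (s ^ 2 + t ^ 2) ^ n := by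
      rw [det_mulC γ (2 * n) hH]
      have h1 : Complex.normSq γ ^ (2 * n) = (Complex.normSq (γ ^ 2)) ^ n := by
        rw [map_pow, ← pow_mul]
      rw [h1, hγ]
      congr 1
      rw [Complex.normSq_mk]
      ring
    have hcomp : (fun j => γ • v j) = (mulC γ : H →ₗ[ℝ] H) ∘ v := rfl
    calc wedgePow (fun a b => s * (ω a b).re + t * (ω a b).im) (2 * n) v
        = G ((mulC γ : H →ₗ[ℝ] H) ∘ v) := by rw [hL, ← hcomp, ← hG]
      _ = G b * b.det ((mulC γ : H →ₗ[ℝ] H) ∘ v) := hsmul _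
      _ = G b * (LinearMap.det (mulC γ : H →ₗ[ℝ] H) * b.det v) := by rw [Module.Basis.det_comp]
      _ = LinearMap.det (mulC γ : H →ₗ[ℝ] H) * (G b * b.det v) := by ring
      _ = (s ^ 2 + t ^ 2) ^ n * G v := by rw [hdet, hsmul v]
      _ = (s ^ 2 + t ^ 2) ^ n * wedgePow (fun a b => (ω a b).re) (2 * n) v := by rw [hG]
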